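/- Let n ≥ 4 or n = ∞, let ε be a central extension of StU(2n,R,𝔏) satisfying property (†), and for i ∈ Ω, j ∈ Ω∖{±i}, a ∈ R set S_ij(a) = [ε⁻¹X_il(a), ε⁻¹X_lj(1)] for any l ∈ Ω∖{±i,±j} (this does not depend on the choice of l). Then S_ij(a)·S_ij(b) = S_ij(a+b) for all a, b ∈ R; moreover S_ij(a) = S_{−j,−i}(ε_{−j}·ā·ε_i). -/

import Mathlib

open MulOpposite
open scoped commutatorElement

universe u

/-- A pseudo-involution on a ring `R`: an additive map `a ↦ ā` such that `1̄` is
invertible (with explicit inverse `e = 1̄⁻¹`), `ā̄ = a` and `(ab)‾ = b̄·1̄⁻¹·ā`. -/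
structure PseudoInvolution (R : Type*) [Ring R] where
  bar : R → R
  bar_add : ∀ a b : R, bar (a + b) = bar a + bar b
  e : R
  e_bar_one : e * bar 1 = 1
  bar_one_e : bar 1 * e = 1
  bar_bar : ∀ a : R, bar (bar a) = a
  bar_mul : ∀ a b : R, bar (a * b) = bar b * e * bar a

/-- An anti-Hermitian form on a right `R`-module `V` (a right module is encoded as a
module over the opposite ring, so `u·a` is `op a • u`). -/
structure AntiHermitianForm (R : Type*) [Ring R] (pi : PseudoInvolution R)
    (V : Type*) [AddCommGroup V] [Module Rᵐᵒᵖ V] where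
  B : V → V → R
  add_left : ∀ u v w : V, B (u + v) w = B u w + B v w
  add_right : ∀ u v w : V, B u (v + w) = B u v + B u w
  smul_pair : ∀ (a b : R) (u v : V), B (op a • u) (op b • v) = pi.bar a * pi.e * B u v * b
  skew : ∀ u v : V, B u v = - pi.bar (B v u)

variable {R : Type u} [Ring R] {pi : PseudoInvolution R}
variable {V : Type u} [AddCommGroup V] [Module Rᵐᵒᵖ V]

/-- The Heisenberg group operation `(u,a) ∔ (v,b) = (u+v, a+b+B(u,v))`. -/
def hAdd (f : AntiHermitianForm R pi V) (x y : V × R) : V × R :=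
  (x.1 + y.1, x.2 + y.2 + f.B x.1 y.1)

/-- The Heisenberg group inverse `∸(u,a) = (−u, −a+B(u,u))`. -/
def hInv (f : AntiHermitianForm R pi V) (x : V × R) : V × R :=
  (-x.1, -x.2 + f.B x.1 x.1)

/-- The right action of `R` on the Heisenberg group, `(u,a) ↼ b = (ub, b̄·1̄⁻¹·a·b)`. -/
def hAct (pi : PseudoInvolution R) (x : V × R) (b : R) : V × R :=
  (op b • x.1, pi.bar b * pi.e * x.2 * b)

/-- An odd form parameter: a subgroup of the Heisenberg group, stable under the
`R`-action, lying between `𝔏_min` and `𝔏_max`. -/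
structure OddFormParameter (f : AntiHermitianForm R pi V) where
  carrier : Set (V × R)
  add_mem : ∀ x y : V × R, x ∈ carrier → y ∈ carrier → hAdd f x y ∈ carrier
  inv_mem : ∀ x : V × R, x ∈ carrier → hInv f x ∈ carrier
  act_mem : ∀ x : V × R, x ∈ carrier → ∀ b : R, hAct pi x b ∈ carrier
  min_le : ∀ a : R, ((0 : V), a + pi.bar a) ∈ carrier
  le_max : ∀ x : V × R, x ∈ carrier → x.2 = pi.bar x.2 + f.B x.1 x.1

/-- The index set `Ω = {1,…,n,−n,…,−1}` (for `n = ∞` all nonzero integers). -/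
def Omega (n : ℕ∞) : Set ℤ := {i : ℤ | i ≠ 0 ∧ (i.natAbs : ℕ∞) ≤ n}

/-- `ε_i = 1̄⁻¹` for `i > 0` and `ε_i = −1` for `i < 0`. -/
def epsI (pi : PseudoInvolution R) (i : ℤ) : R := if 0 < i then pi.e else -1

/-- A family of "Steinberg generators" in a group `G` satisfying Petrov's relations
R0–R9 of the odd unitary Steinberg group `StU(2n, R, 𝔏)`. -/
structure StURels (n : ℕ∞) (f : AntiHermitianForm R pi V) (L : OddFormParameter f)
    (G : Type*) [Group G] where
  X : ℤ → ℤ → R → G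
  Y : ℤ → V × R → G
  rel0 : ∀ i j : ℤ, i ∈ Omega n → j ∈ Omega n → j ≠ i → j ≠ -i → ∀ a : R,
    X i j a = X (-j) (-i) (epsI pi (-j) * pi.bar a * epsI pi i)
  rel1 : ∀ i j : ℤ, i ∈ Omega n → j ∈ Omega n → j ≠ i → j ≠ -i → ∀ a b : R,
    X i j a * X i j b = X i j (a + b)
  rel2 : ∀ i : ℤ, i ∈ Omega n → ∀ ξ ζ : V × R, ξ ∈ L.carrier → ζ ∈ L.carrier →
    Y i ξ * Y i ζ = Y i (hAdd f ξ ζ)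
  rel3 : ∀ i j h k : ℤ, i ∈ Omega n → j ∈ Omega n → h ∈ Omega n → k ∈ Omega n →
    j ≠ i → j ≠ -i → k ≠ h → k ≠ -h → h ≠ j → h ≠ -i → k ≠ i → k ≠ -j →
    ∀ a b : R, ⁅X i j a, X h k b⁆ = 1
  rel4 : ∀ i j k : ℤ, i ∈ Omega n → j ∈ Omega n → k ∈ Omega n → k ≠ j → k ≠ -j →
    j ≠ -i → k ≠ i → ∀ ξ : V × R, ξ ∈ L.carrier → ∀ a : R, ⁅Y i ξ, X j k a⁆ = 1
  rel5 : ∀ i j k : ℤ, i ∈ Omega n → j ∈ Omega n → k ∈ Omega n →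
    j ≠ i → j ≠ -i → k ≠ j → k ≠ -j → k ≠ i → k ≠ -i →
    ∀ a b : R, ⁅X i j a, X j k b⁆ = X i k (a * b)
  rel6 : ∀ i j : ℤ, i ∈ Omega n → j ∈ Omega n → j ≠ i → j ≠ -i →
    ∀ (u : V) (a : R) (v : V) (b : R), (u, a) ∈ L.carrier → (v, b) ∈ L.carrier →
    ⁅Y i (u, a), Y j (v, b)⁆ = X i (-j) (epsI pi i * f.B u v)
  rel7 : ∀ i : ℤ, i ∈ Omega n →
    ∀ (u : V) (a : R) (v : V) (b : R), (u, a) ∈ L.carrier → (v, b) ∈ L.carrier →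
    ⁅Y i (u, a), Y i (v, b)⁆ = Y i (0, f.B u v - f.B v u)
  rel8 : ∀ i j : ℤ, i ∈ Omega n → j ∈ Omega n → j ≠ i → j ≠ -i →
    ∀ (u : V) (a : R), (u, a) ∈ L.carrier → ∀ b : R,
    ⁅Y i (u, a), X (-i) j b⁆ = X i j (epsI pi i * a * b) * Y (-j) (hAct pi (u, -pi.bar a) b)
  rel9 : ∀ i j : ℤ, i ∈ Omega n → j ∈ Omega n → j ≠ i → j ≠ -i → ∀ a b : R,
    ⁅X i j a, X j (-i) b⁆ =
      Y i (0, -(epsI pi (-i)) * pi.bar 1 * a * b + pi.bar b * pi.e * pi.bar a * epsI pi i)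

/-- `(G, S)` *is* the odd unitary Steinberg group `StU(2n, R, 𝔏)`: it has the universal
property of the presentation, i.e. for every group `H` with Steinberg generators
satisfying R0–R9 there is a unique homomorphism `G →* H` matching the generators. -/
def IsStU {n : ℕ∞} {f : AntiHermitianForm R pi V} {L : OddFormParameter f}
    {G : Type u} [Group G] (S : StURels n f L G) : Prop :=
  ∀ (H : Type u) [Group H], ∀ T : StURels n f L H,
    ∃! φ : G →* H,
      (∀ i j : ℤ, i ∈ Omega n → j ∈ Omega n → j ≠ i → j ≠ -i → ∀ a : R,
        φ (S.X i j a) = T.X i j a) ∧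
      (∀ i : ℤ, i ∈ Omega n → ∀ ξ : V × R, ξ ∈ L.carrier → φ (S.Y i ξ) = T.Y i ξ)

/-- A central extension: a surjective group homomorphism whose kernel is central. -/
structure IsCentralExtension {H : Type*} {G : Type*} [Group H] [Group G]
    (ε : H →* G) : Prop where
  surjective : Function.Surjective ε
  central : ε.ker ≤ Subgroup.center H

/-- Property (†): preimages of `X_ij(a)` and `X_kh(b)` commute whenever the eight
indices `±i, ±j, ±k, ±h` are pairwise distinct. -/
def DaggerProp {n : ℕ∞} {f : AntiHermitianForm R pi V} {L : OddFormParameter f}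
    {G : Type u} [Group G] (S : StURels n f L G)
    {H : Type u} [Group H] (ε : H →* G) : Prop :=
  ∀ i j k h : ℤ, i ∈ Omega n → j ∈ Omega n → k ∈ Omega n → h ∈ Omega n →
    ({i, -i, j, -j, k, -k, h, -h} : Finset ℤ).card = 8 →
    ∀ a b : R, ∀ u v : H, ε u = S.X i j a → ε v = S.X k h b → ⁅u, v⁆ = 1


section AuxGroupLemmas

variable {H' : Type*} [Group H']

lemma comm_mul_central_left (u w z : H') (hz : ∀ g, z * g = g * z) :
    ⁅u * z, w⁆ = ⁅u, w⁆ := by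
  calc ⁅u * z, w⁆ = u * ((z * w) * (z⁻¹ * (u⁻¹ * w⁻¹))) := by group
    _ = u * ((w * z) * (z⁻¹ * (u⁻¹ * w⁻¹))) := by rw [hz w]
    _ = ⁅u, w⁆ := by group

lemma comm_mul_central_right (u w z : H') (hz : ∀ g, z * g = g * z) :
    ⁅u, w * z⁆ = ⁅u, w⁆ := by
  calc ⁅u, w * z⁆ = u * (w * ((z * u⁻¹) * (z⁻¹ * w⁻¹))) := by group
    _ = u * (w * ((u⁻¹ * z) * (z⁻¹ * w⁻¹))) := by rw [hz u⁻¹]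
    _ = ⁅u, w⁆ := by group

lemma key2 (b x y : H') (hx : ∀ g, ⁅b, x⁆ * g = g * ⁅b, x⁆)
    (hy : ∀ g, ⁅b, y⁆ * g = g * ⁅b, y⁆) : ⁅b, ⁅x, y⁆⁆ = 1 := by
  set zx := ⁅b, x⁆ with hzx
  set zy := ⁅b, y⁆ with hzy
  have hx' : ∀ g, zx⁻¹ * g = g * zx⁻¹ := by
    intro g
    calc zx⁻¹ * g = zx⁻¹ * ((g * zx) * zx⁻¹) := by group
      _ = zx⁻¹ * ((zx * g) * zx⁻¹) := by rw [hx g]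
      _ = g * zx⁻¹ := by group
  have hxy : ∀ g, (zx * zy) * g = g * (zx * zy) := by
    intro g
    calc (zx * zy) * g = zx * (zy * g) := by group
      _ = zx * (g * zy) := by rw [hy g]
      _ = (zx * g) * zy := by group
      _ = (g * zx) * zy := by rw [hx g]
      _ = g * (zx * zy) := by group
  have e1 : b * ⁅x, y⁆ * b⁻¹ =
      (zx * x) * ((zy * y) * ((x⁻¹ * zx⁻¹) * (y⁻¹ * zy⁻¹))) := by
    rw [hzx, hzy]; group
  have e2 : (zx * x) * ((zy * y) * ((x⁻¹ * zx⁻¹) * (y⁻¹ * zy⁻¹))) =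
      x * (y * (x⁻¹ * y⁻¹)) := by
    calc (zx * x) * ((zy * y) * ((x⁻¹ * zx⁻¹) * (y⁻¹ * zy⁻¹)))
        = zx * ((x * zy) * (y * (x⁻¹ * ((zx⁻¹ * y⁻¹) * zy⁻¹)))) := by group
      _ = zx * ((zy * x) * (y * (x⁻¹ * ((zx⁻¹ * y⁻¹) * zy⁻¹)))) := by rw [← hy x]
      _ = zx * ((zy * x) * (y * (x⁻¹ * ((y⁻¹ * zx⁻¹) * zy⁻¹)))) := by rw [hx' y⁻¹]
      _ = (zx * zy) * ((x * (y * (x⁻¹ * y⁻¹))) * (zx⁻¹ * zy⁻¹)) := by group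
      _ = (zx * zy) * ((x * (y * (x⁻¹ * y⁻¹))) * (zy⁻¹ * zx⁻¹)) := by rw [hx' zy⁻¹]
      _ = ((zx * zy) * (x * (y * (x⁻¹ * y⁻¹)))) * (zy⁻¹ * zx⁻¹) := by group
      _ = ((x * (y * (x⁻¹ * y⁻¹))) * (zx * zy)) * (zy⁻¹ * zx⁻¹) := by
            rw [hxy (x * (y * (x⁻¹ * y⁻¹)))]
      _ = x * (y * (x⁻¹ * y⁻¹)) := by group
  have e3 : b * ⁅x, y⁆ * b⁻¹ = x * (y * (x⁻¹ * y⁻¹)) := e1.trans e2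
  calc ⁅b, ⁅x, y⁆⁆ = (b * ⁅x, y⁆ * b⁻¹) * ⁅x, y⁆⁻¹ := by group
    _ = (x * (y * (x⁻¹ * y⁻¹))) * ⁅x, y⁆⁻¹ := by rw [e3]
    _ = 1 := by group

lemma key1 (u s w : H') (huw : ⁅u, w⁆ = 1)
    (hAB : ⁅⁅u, s⁆, ⁅s, w⁆⁆ = 1)
    (hz : ∀ g, ⁅⁅s, w⁆, w⁆ * g = g * ⁅⁅s, w⁆, w⁆) :
    ⁅u, ⁅s, w⁆⁆ = ⁅⁅u, s⁆, w⁆ := by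
  have hc : Commute u w := commutatorElement_eq_one_iff_commute.mp huw
  have h1 : u⁻¹ * w = w * u⁻¹ := hc.inv_left.eq
  have h2 : u⁻¹ * w⁻¹ = w⁻¹ * u⁻¹ := hc.inv_left.inv_right.eq
  have subI : ⁅⁅u, s⁆, ⁅s, w⁆ * w⁆ = ⁅u, ⁅s, w⁆⁆ := by
    calc ⁅⁅u, s⁆, ⁅s, w⁆ * w⁆
        = u * (s * ((u⁻¹ * w) * (u * (s⁻¹ * ((u⁻¹ * w⁻¹) * ⁅s, w⁆⁻¹))))) := by group
      _ = u * (s * ((w * u⁻¹) * (u * (s⁻¹ * ((u⁻¹ * w⁻¹) * ⁅s, w⁆⁻¹))))) := by rw [h1]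
      _ = u * (s * (w * (s⁻¹ * ((u⁻¹ * w⁻¹) * ⁅s, w⁆⁻¹)))) := by group
      _ = u * (s * (w * (s⁻¹ * ((w⁻¹ * u⁻¹) * ⁅s, w⁆⁻¹)))) := by rw [h2]
      _ = ⁅u, ⁅s, w⁆⁆ := by group
  have hBA : ∀ g, ⁅⁅s, w⁆, ⁅u, s⁆⁆ * g = g * ⁅⁅s, w⁆, ⁅u, s⁆⁆ := by
    intro g
    have h0 : ⁅⁅s, w⁆, ⁅u, s⁆⁆ = 1 := by
      rw [← commutatorElement_inv, hAB, inv_one]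
    rw [h0, one_mul, mul_one]
  have k : ⁅⁅s, w⁆, ⁅⁅u, s⁆, w⁆⁆ = 1 := key2 ⁅s, w⁆ ⁅u, s⁆ w hBA hz
  have subII : ⁅⁅u, s⁆, ⁅s, w⁆ * w⁆ = ⁅⁅u, s⁆, w⁆ := by
    calc ⁅⁅u, s⁆, ⁅s, w⁆ * w⁆
        = ⁅⁅u, s⁆, ⁅s, w⁆⁆ * (⁅s, w⁆ * (⁅⁅u, s⁆, w⁆ * ⁅s, w⁆⁻¹)) := by group
      _ = ⁅s, w⁆ * (⁅⁅u, s⁆, w⁆ * ⁅s, w⁆⁻¹) := by rw [hAB, one_mul]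
      _ = ⁅⁅s, w⁆, ⁅⁅u, s⁆, w⁆⁆ * ⁅⁅u, s⁆, w⁆ := by group
      _ = ⁅⁅u, s⁆, w⁆ := by rw [k, one_mul]
  exact subI.symm.trans subII

lemma comm_eq {G' : Type*} [Group G'] (ε : H' →* G')
    (hc : ε.ker ≤ Subgroup.center H') {u v u' v' : H'}
    (hu : ε u = ε u') (hv : ε v = ε v') : ⁅u, v⁆ = ⁅u', v'⁆ := by
  have hzu : ∀ g, (u⁻¹ * u') * g = g * (u⁻¹ * u') := by
    have hk : u⁻¹ * u' ∈ ε.ker := by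
      rw [MonoidHom.mem_ker, map_mul, map_inv, hu]
      group
    intro g
    exact ((Subgroup.mem_center_iff.mp (hc hk)) g).symm
  have hzv : ∀ g, (v⁻¹ * v') * g = g * (v⁻¹ * v') := by
    have hk : v⁻¹ * v' ∈ ε.ker := by
      rw [MonoidHom.mem_ker, map_mul, map_inv, hv]
      group
    intro g
    exact ((Subgroup.mem_center_iff.mp (hc hk)) g).symm
  calc ⁅u, v⁆ = ⁅u, v * (v⁻¹ * v')⁆ := (comm_mul_central_right u v _ hzv).symm
    _ = ⁅u * (u⁻¹ * u'), v * (v⁻¹ * v')⁆ := (comm_mul_central_left u _ _ hzu).symm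
    _ = ⁅u', v'⁆ := by group

end AuxGroupLemmas

lemma card8 {i j k h : ℤ} (hi0 : i ≠ 0) (hj0 : j ≠ 0) (hk0 : k ≠ 0) (hh0 : h ≠ 0)
    (h1 : j ≠ i) (h2 : j ≠ -i) (h3 : k ≠ i) (h4 : k ≠ -i) (h5 : k ≠ j) (h6 : k ≠ -j)
    (h7 : h ≠ i) (h8 : h ≠ -i) (h9 : h ≠ j) (h10 : h ≠ -j) (h11 : h ≠ k) (h12 : h ≠ -k) :
    ({i, -i, j, -j, k, -k, h, -h} : Finset ℤ).card = 8 := by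
  rw [Finset.card_insert_of_notMem (by simp only [Finset.mem_insert, Finset.mem_singleton]; omega),
    Finset.card_insert_of_notMem (by simp only [Finset.mem_insert, Finset.mem_singleton]; omega),
    Finset.card_insert_of_notMem (by simp only [Finset.mem_insert, Finset.mem_singleton]; omega),
    Finset.card_insert_of_notMem (by simp only [Finset.mem_insert, Finset.mem_singleton]; omega),
    Finset.card_insert_of_notMem (by simp only [Finset.mem_insert, Finset.mem_singleton]; omega),
    Finset.card_insert_of_notMem (by simp only [Finset.mem_insert, Finset.mem_singleton]; omega),
    Finset.card_insert_of_notMem (by simp only [Finset.mem_singleton]; omega),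
    Finset.card_singleton]

lemma neg_mem_Omega {n : ℕ∞} {i : ℤ} (hi : i ∈ Omega n) : -i ∈ Omega n := by
  obtain ⟨h1, h2⟩ := hi
  exact ⟨neg_ne_zero.mpr h1, by rwa [Int.natAbs_neg]⟩

lemma fresh_index (n : ℕ∞) (hn : 4 ≤ n) (i j l : ℤ) :
    ∃ m : ℤ, m ∈ Omega n ∧ m ≠ i ∧ m ≠ -i ∧ m ≠ j ∧ m ≠ -j ∧ m ≠ l ∧ m ≠ -l := by
  have hsub : ¬ (({1, 2, 3, 4} : Finset ℕ) ⊆ {i.natAbs, j.natAbs, l.natAbs}) := by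
    intro hs
    have hle := Finset.card_le_card hs
    have h4 : ({1, 2, 3, 4} : Finset ℕ).card = 4 := by decide
    have h3 : ({i.natAbs, j.natAbs, l.natAbs} : Finset ℕ).card ≤ 3 := by
      exact le_trans (Finset.card_insert_le _ _)
        (by exact Nat.succ_le_succ (le_trans (Finset.card_insert_le _ _) (by simp)))
    omega
  obtain ⟨x, hxt, hxs⟩ := Finset.not_subset.mp hsub
  simp only [Finset.mem_insert, Finset.mem_singleton] at hxt hxs
  push_neg at hxs
  obtain ⟨hxi, hxj, hxl⟩ := hxs
  refine ⟨(x : ℤ), ⟨?_, ?_⟩, ?_, ?_, ?_, ?_, ?_, ?_⟩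
  · omega
  · have hx4 : x ≤ 4 := by omega
    have hcst : ((x : ℤ).natAbs : ℕ∞) = (x : ℕ∞) := by rw [Int.natAbs_natCast]
    rw [hcst]
    calc (x : ℕ∞) ≤ (4 : ℕ∞) := by exact_mod_cast hx4
      _ ≤ n := hn
  all_goals (intro hh; first | (apply hxi; omega) | (apply hxj; omega) | (apply hxl; omega))

lemma X_zero {n : ℕ∞} {f : AntiHermitianForm R pi V} {L : OddFormParameter f}
    {G : Type u} [Group G] (S : StURels n f L G) (i j : ℤ)
    (hi : i ∈ Omega n) (hj : j ∈ Omega n) (hji : j ≠ i) (hji' : j ≠ -i) :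
    S.X i j 0 = 1 := by
  have h := S.rel1 i j hi hj hji hji' 0 0
  rw [add_zero] at h
  exact mul_left_cancel (a := S.X i j 0) (by rw [mul_one]; exact h)

lemma stepS (f : AntiHermitianForm R pi V) (L : OddFormParameter f) (n : ℕ∞)
    {G : Type u} [Group G] (S : StURels n f L G)
    {H : Type u} [Group H] (ε : H →* G) (hε : IsCentralExtension ε)
    (hdag : DaggerProp S ε)
    (i j l l' : ℤ) (hi : i ∈ Omega n) (hj : j ∈ Omega n) (hl : l ∈ Omega n)
    (hl' : l' ∈ Omega n)
    (hji : j ≠ i) (hji' : j ≠ -i)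
    (hli : l ≠ i) (hli' : l ≠ -i) (hlj : l ≠ j) (hlj' : l ≠ -j)
    (hl'i : l' ≠ i) (hl'i' : l' ≠ -i) (hl'j : l' ≠ j) (hl'j' : l' ≠ -j)
    (hl'l : l' ≠ l) (hl'l' : l' ≠ -l)
    (a b : R) (u v u' v' : H)
    (hu : ε u = S.X i l a) (hv : ε v = S.X l j b)
    (hu' : ε u' = S.X i l' (a * b)) (hv' : ε v' = S.X l' j 1) :
    ⁅u, v⁆ = ⁅u', v'⁆ := by
  have hi0 : i ≠ 0 := hi.1
  have hj0 : j ≠ 0 := hj.1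
  have hl0 : l ≠ 0 := hl.1
  have hl'0 : l' ≠ 0 := hl'.1
  obtain ⟨s, hs⟩ := hε.surjective (S.X l l' b)
  obtain ⟨w, hw⟩ := hε.surjective (S.X l' j 1)
  have hB : ε ⁅s, w⁆ = S.X l j b := by
    rw [map_commutatorElement, hs, hw,
      S.rel5 l l' j hl hl' hj (by omega) (by omega) (by omega) (by omega) (by omega)
        (by omega) b 1, mul_one]
  have hA : ε ⁅u, s⁆ = S.X i l' (a * b) := by
    rw [map_commutatorElement, hu, hs,
      S.rel5 i l l' hi hl hl' (by omega) (by omega) (by omega) (by omega) (by omega)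
        (by omega) a b]
  have huw : ⁅u, w⁆ = 1 :=
    hdag i l l' j hi hl hl' hj
      (card8 hi0 hl0 hl'0 hj0 (by omega) (by omega) (by omega) (by omega) (by omega)
        (by omega) (by omega) (by omega) (by omega) (by omega) (by omega) (by omega))
      a 1 u w hu hw
  have hAB : ⁅⁅u, s⁆, ⁅s, w⁆⁆ = 1 :=
    hdag i l' l j hi hl' hl hj
      (card8 hi0 hl'0 hl0 hj0 (by omega) (by omega) (by omega) (by omega) (by omega)
        (by omega) (by omega) (by omega) (by omega) (by omega) (by omega) (by omega))
      (a * b) b ⁅u, s⁆ ⁅s, w⁆ hA hB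
  have hzker : ⁅⁅s, w⁆, w⁆ ∈ ε.ker := by
    rw [MonoidHom.mem_ker, map_commutatorElement, hB, hw]
    exact S.rel3 l j l' j hl hj hl' hj (by omega) (by omega) (by omega) (by omega)
      (by omega) (by omega) (by omega) (by omega) b 1
  have hzc : ∀ g, ⁅⁅s, w⁆, w⁆ * g = g * ⁅⁅s, w⁆, w⁆ := fun g =>
    ((Subgroup.mem_center_iff.mp (hε.central hzker)) g).symm
  calc ⁅u, v⁆ = ⁅u, ⁅s, w⁆⁆ := comm_eq ε hε.central rfl (hv.trans hB.symm)
    _ = ⁅⁅u, s⁆, w⁆ := key1 u s w huw hAB hzc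
    _ = ⁅u', v'⁆ := comm_eq ε hε.central (hA.trans hu'.symm) (hw.trans hv'.symm)

lemma indepS (f : AntiHermitianForm R pi V) (L : OddFormParameter f) (n : ℕ∞)
    (hn : 4 ≤ n)
    {G : Type u} [Group G] (S : StURels n f L G)
    {H : Type u} [Group H] (ε : H →* G) (hε : IsCentralExtension ε)
    (hdag : DaggerProp S ε)
    (i j : ℤ) (hi : i ∈ Omega n) (hj : j ∈ Omega n) (hji : j ≠ i) (hji' : j ≠ -i)
    (l l' : ℤ) (hl : l ∈ Omega n) (hl' : l' ∈ Omega n)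
    (hli : l ≠ i) (hli' : l ≠ -i) (hlj : l ≠ j) (hlj' : l ≠ -j)
    (hl'i : l' ≠ i) (hl'i' : l' ≠ -i) (hl'j : l' ≠ j) (hl'j' : l' ≠ -j)
    (a : R) (u v u' v' : H)
    (hu : ε u = S.X i l a) (hv : ε v = S.X l j 1)
    (hu' : ε u' = S.X i l' a) (hv' : ε v' = S.X l' j 1) :
    ⁅u, v⁆ = ⁅u', v'⁆ := by
  by_cases hc1 : l' = l
  · subst hc1
    exact comm_eq ε hε.central (hu.trans hu'.symm) (hv.trans hv'.symm)
  · by_cases hc2 : l' = -l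
    · obtain ⟨m, hm, hmi, hmi', hmj, hmj', hml, hml'⟩ := fresh_index n hn i j l
      obtain ⟨um, hum⟩ := hε.surjective (S.X i m a)
      obtain ⟨vm, hvm⟩ := hε.surjective (S.X m j 1)
      have e1 : ⁅u, v⁆ = ⁅um, vm⁆ :=
        stepS f L n S ε hε hdag i j l m hi hj hl hm hji hji' hli hli' hlj hlj'
          hmi hmi' hmj hmj' hml hml' a 1 u v um vm hu hv
          (by rw [mul_one]; exact hum) hvm
      have e2 : ⁅u', v'⁆ = ⁅um, vm⁆ :=
        stepS f L n S ε hε hdag i j l' m hi hj hl' hm hji hji' hl'i hl'i' hl'j hl'j'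
          hmi hmi' hmj hmj' (by omega) (by omega) a 1 u' v' um vm hu' hv'
          (by rw [mul_one]; exact hum) hvm
      exact e1.trans e2.symm
    · exact stepS f L n S ε hε hdag i j l l' hi hj hl hl' hji hji' hli hli' hlj hlj'
        hl'i hl'i' hl'j hl'j' hc1 hc2 a 1 u v u' v' hu hv
        (by rw [mul_one]; exact hu') hv'

lemma addS (f : AntiHermitianForm R pi V) (L : OddFormParameter f) (n : ℕ∞)
    (hn : 4 ≤ n)
    {G : Type u} [Group G] (S : StURels n f L G)
    {H : Type u} [Group H] (ε : H →* G) (hε : IsCentralExtension ε)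
    (hdag : DaggerProp S ε)
    (i j : ℤ) (hi : i ∈ Omega n) (hj : j ∈ Omega n) (hji : j ≠ i) (hji' : j ≠ -i)
    (l : ℤ) (hl : l ∈ Omega n)
    (hli : l ≠ i) (hli' : l ≠ -i) (hlj : l ≠ j) (hlj' : l ≠ -j)
    (a b : R) (ua va ub vb uc vc : H)
    (hua : ε ua = S.X i l a) (hva : ε va = S.X l j 1)
    (hub : ε ub = S.X i l b) (hvb : ε vb = S.X l j 1)
    (huc : ε uc = S.X i l (a + b)) (hvc : ε vc = S.X l j 1) :
    ⁅ua, va⁆ * ⁅ub, vb⁆ = ⁅uc, vc⁆ := by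
  have hi0 : i ≠ 0 := hi.1
  have hj0 : j ≠ 0 := hj.1
  have hl0 : l ≠ 0 := hl.1
  obtain ⟨l', hl'Ω, hl'i, hl'i', hl'j, hl'j', hl'l, hl'l'⟩ := fresh_index n hn i j l
  have hl'0 : l' ≠ 0 := hl'Ω.1
  obtain ⟨u1, hu1⟩ := hε.surjective (S.X i l' a)
  obtain ⟨v1, hv1⟩ := hε.surjective (S.X l' j 1)
  have hstep : ⁅ua, va⁆ = ⁅u1, v1⁆ :=
    stepS f L n S ε hε hdag i j l l' hi hj hl hl'Ω hji hji' hli hli' hlj hlj'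
      hl'i hl'i' hl'j hl'j' hl'l hl'l' a 1 ua va u1 v1 hua hva
      (by rw [mul_one]; exact hu1) hv1
  have hbv : ⁅ub, v1⁆ = 1 :=
    hdag i l l' j hi hl hl'Ω hj
      (card8 hi0 hl0 hl'0 hj0 (by omega) (by omega) (by omega) (by omega) (by omega)
        (by omega) (by omega) (by omega) (by omega) (by omega) (by omega) (by omega))
      b 1 ub v1 hub hv1
  have hker : ⁅ub, u1⁆ ∈ ε.ker := by
    rw [MonoidHom.mem_ker, map_commutatorElement, hub, hu1]
    exact S.rel3 i l i l' hi hl hi hl'Ω (by omega) (by omega) (by omega) (by omega)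
      (by omega) (by omega) (by omega) (by omega) b a
  have hxc : ∀ g, ⁅ub, u1⁆ * g = g * ⁅ub, u1⁆ := fun g =>
    ((Subgroup.mem_center_iff.mp (hε.central hker)) g).symm
  have hyc : ∀ g, ⁅ub, v1⁆ * g = g * ⁅ub, v1⁆ := fun g => by rw [hbv, one_mul, mul_one]
  have k0 : ⁅ub, ⁅u1, v1⁆⁆ = 1 := key2 ub u1 v1 hxc hyc
  have k1 : ⁅ub, ⁅ua, va⁆⁆ = 1 := by rw [hstep]; exact k0
  have hcomm : ub * ⁅ua, va⁆ = ⁅ua, va⁆ * ub :=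
    (commutatorElement_eq_one_iff_commute.mp k1).eq
  have hmul : ε (ub * ua) = S.X i l (a + b) := by
    rw [map_mul, hub, hua, S.rel1 i l hi hl (by omega) (by omega) b a, add_comm b a]
  have hc2 : ⁅uc, vc⁆ = ⁅ub * ua, va⁆ :=
    comm_eq ε hε.central (huc.trans hmul.symm) (hvc.trans hva.symm)
  have hfin : ⁅ub * ua, va⁆ = ⁅ua, va⁆ * ⁅ub, va⁆ := by
    calc ⁅ub * ua, va⁆ = (ub * ⁅ua, va⁆) * (ub⁻¹ * ⁅ub, va⁆) := by group
      _ = (⁅ua, va⁆ * ub) * (ub⁻¹ * ⁅ub, va⁆) := by rw [hcomm]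
      _ = ⁅ua, va⁆ * ⁅ub, va⁆ := by group
  have hbb : ⁅ub, va⁆ = ⁅ub, vb⁆ := comm_eq ε hε.central rfl (hva.trans hvb.symm)
  rw [← hbb, hc2, hfin]

lemma ne_neg_neg {a b : ℤ} (h : a ≠ b) : -a ≠ -b := fun hh => h (neg_injective hh)

lemma ne_swap_neg {a b : ℤ} (h : a ≠ -b) : b ≠ -a := fun hh => h (by rw [hh, neg_neg])

lemma ne_nneg {a b : ℤ} (h : a ≠ b) : a ≠ -(-b) := fun hh => h (by rwa [neg_neg] at hh)

lemma part3S (f : AntiHermitianForm R pi V) (L : OddFormParameter f) (n : ℕ∞)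
    (hn : 4 ≤ n)
    {G : Type u} [Group G] (S : StURels n f L G)
    {H : Type u} [Group H] (ε : H →* G) (hε : IsCentralExtension ε)
    (hdag : DaggerProp S ε)
    (i j : ℤ) (hi : i ∈ Omega n) (hj : j ∈ Omega n) (hji : j ≠ i) (hji' : j ≠ -i)
    (l m : ℤ) (hl : l ∈ Omega n) (hm : m ∈ Omega n)
    (hli : l ≠ i) (hli' : l ≠ -i) (hlj : l ≠ j) (hlj' : l ≠ -j)
    (hmi : m ≠ i) (hmi' : m ≠ -i) (hmj : m ≠ j) (hmj' : m ≠ -j)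
    (a : R) (u v u' v' : H)
    (hu : ε u = S.X i l a) (hv : ε v = S.X l j 1)
    (hu' : ε u' = S.X (-j) m (epsI pi (-j) * pi.bar a * epsI pi i))
    (hv' : ε v' = S.X m (-i) 1) :
    ⁅u, v⁆ = ⁅u', v'⁆ := by
  have hl0 : l ≠ 0 := hl.1
  obtain ⟨m', hm'Ω, hm'i, hm'i', hm'j, hm'j', hm'l, hm'l'⟩ := fresh_index n hn i j l
  have hu2 : ε u = S.X (-l) (-i) (epsI pi (-l) * pi.bar a * epsI pi i) := by
    rw [hu]; exact S.rel0 i l hi hl hli hli' a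
  have hv2 : ε v = S.X (-j) (-l) (epsI pi (-j) * pi.bar 1 * epsI pi l) := by
    rw [hv]; exact S.rel0 l j hl hj (Ne.symm hlj) (ne_swap_neg hlj') 1
  obtain ⟨u1, hu1⟩ := hε.surjective (S.X (-j) m'
    ((epsI pi (-j) * pi.bar 1 * epsI pi l) * (epsI pi (-l) * pi.bar a * epsI pi i)))
  obtain ⟨v1, hv1⟩ := hε.surjective (S.X m' (-i) 1)
  have hvu : ⁅v, u⁆ = ⁅u1, v1⁆ :=
    stepS f L n S ε hε hdag (-j) (-i) (-l) m' (neg_mem_Omega hj) (neg_mem_Omega hi)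
      (neg_mem_Omega hl) hm'Ω
      (ne_neg_neg hji.symm) (ne_neg_neg (ne_swap_neg hji'))
      (ne_neg_neg hlj) (ne_neg_neg hlj') (ne_neg_neg hli) (ne_neg_neg hli')
      hm'j' (ne_nneg hm'j) hm'i' (ne_nneg hm'i) hm'l' (ne_nneg hm'l)
      (epsI pi (-j) * pi.bar 1 * epsI pi l) (epsI pi (-l) * pi.bar a * epsI pi i)
      v u u1 v1 hv2 hu2 hu1 hv1
  have hll : pi.bar 1 * (epsI pi l * epsI pi (-l)) = -1 := by
    rcases lt_or_gt_of_ne hl0 with hneg | hpos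
    · have e1 : epsI pi l = -1 := by
        simp only [epsI]; rw [if_neg (not_lt.mpr hneg.le)]
      have e2 : epsI pi (-l) = pi.e := by
        simp only [epsI]; rw [if_pos (neg_pos.mpr hneg)]
      rw [e1, e2, neg_one_mul, mul_neg, pi.bar_one_e]
    · have e1 : epsI pi l = pi.e := by simp only [epsI]; rw [if_pos hpos]
      have e2 : epsI pi (-l) = -1 := by
        simp only [epsI]; rw [if_neg (not_lt.mpr (neg_nonpos.mpr hpos.le))]
      rw [e1, e2, mul_neg_one, mul_neg, pi.bar_one_e]
  have hqp : (epsI pi (-j) * pi.bar 1 * epsI pi l) *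
      (epsI pi (-l) * pi.bar a * epsI pi i) =
      -(epsI pi (-j) * pi.bar a * epsI pi i) := by
    have h1 : (epsI pi (-j) * pi.bar 1 * epsI pi l) *
        (epsI pi (-l) * pi.bar a * epsI pi i) =
        epsI pi (-j) * ((pi.bar 1 * (epsI pi l * epsI pi (-l))) *
          (pi.bar a * epsI pi i)) := by
      simp only [mul_assoc]
    rw [h1, hll, neg_one_mul, mul_neg, ← mul_assoc]
  have hu1' : ε u1 = S.X (-j) m' (-(epsI pi (-j) * pi.bar a * epsI pi i)) := by
    rw [hu1, hqp]
  obtain ⟨u2, hu2'⟩ := hε.surjective (S.X (-j) m' (epsI pi (-j) * pi.bar a * epsI pi i))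
  have hzero : S.X (-j) m' (-(epsI pi (-j) * pi.bar a * epsI pi i) +
      (epsI pi (-j) * pi.bar a * epsI pi i)) = 1 := by
    rw [neg_add_cancel]
    exact X_zero S (-j) m' (neg_mem_Omega hj) hm'Ω hm'j' (ne_nneg hm'j)
  have hadd : ⁅u1, v1⁆ * ⁅u2, v1⁆ = ⁅(1 : H), v1⁆ :=
    addS f L n hn S ε hε hdag (-j) (-i) (neg_mem_Omega hj) (neg_mem_Omega hi)
      (ne_neg_neg hji.symm) (ne_neg_neg (ne_swap_neg hji')) m' hm'Ω
      hm'j' (ne_nneg hm'j) hm'i' (ne_nneg hm'i)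
      (-(epsI pi (-j) * pi.bar a * epsI pi i)) (epsI pi (-j) * pi.bar a * epsI pi i)
      u1 v1 u2 v1 1 v1 hu1' hv1 hu2' hv1 (by rw [map_one]; exact hzero.symm) hv1
  have hone : ⁅u1, v1⁆ * ⁅u2, v1⁆ = 1 := by rw [hadd, commutatorElement_one_left]
  have hinv : ⁅u1, v1⁆⁻¹ = ⁅u2, v1⁆ := inv_eq_of_mul_eq_one_right hone
  have hindep : ⁅u2, v1⁆ = ⁅u', v'⁆ :=
    indepS f L n hn S ε hε hdag (-j) (-i) (neg_mem_Omega hj) (neg_mem_Omega hi)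
      (ne_neg_neg hji.symm) (ne_neg_neg (ne_swap_neg hji')) m' m hm'Ω hm
      hm'j' (ne_nneg hm'j) hm'i' (ne_nneg hm'i)
      hmj' (ne_nneg hmj) hmi' (ne_nneg hmi)
      (epsI pi (-j) * pi.bar a * epsI pi i) u2 v1 u' v' hu2' hv1 hu' hv'
  calc ⁅u, v⁆ = ⁅v, u⁆⁻¹ := by rw [commutatorElement_inv]
    _ = ⁅u1, v1⁆⁻¹ := by rw [hvu]
    _ = ⁅u2, v1⁆ := hinv
    _ = ⁅u', v'⁆ := hindep

/-- For `n ≥ 4` and a central extension `ε` of `StU(2n,R,𝔏)` with property (†), the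
elements `S_ij(a) = [ε⁻¹X_il(a), ε⁻¹X_lj(1)]` (for any `l ∈ Ω ∖ {±i, ±j}`) are
well defined (independent of `l`), additive (`S_ij(a)·S_ij(b) = S_ij(a+b)`), and
satisfy `S_ij(a) = S_{−j,−i}(ε_{−j}·ā·ε_i)`. -/
theorem S_additive_and_symmetric (f : AntiHermitianForm R pi V)
    (L : OddFormParameter f) (n : ℕ∞) (hn : 4 ≤ n)
    {G : Type u} [Group G] (S : StURels n f L G) (hS : IsStU S)
    {H : Type u} [Group H] (ε : H →* G) (hε : IsCentralExtension ε)
    (hdag : DaggerProp S ε) :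
    ∀ i j : ℤ, i ∈ Omega n → j ∈ Omega n → j ≠ i → j ≠ -i →
      (∀ l l' : ℤ, l ∈ Omega n → l' ∈ Omega n →
        l ≠ i → l ≠ -i → l ≠ j → l ≠ -j → l' ≠ i → l' ≠ -i → l' ≠ j → l' ≠ -j →
        ∀ a : R, ∀ u v u' v' : H,
          ε u = S.X i l a → ε v = S.X l j 1 →
          ε u' = S.X i l' a → ε v' = S.X l' j 1 →
          ⁅u, v⁆ = ⁅u', v'⁆) ∧
      (∀ l : ℤ, l ∈ Omega n → l ≠ i → l ≠ -i → l ≠ j → l ≠ -j →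
        ∀ a b : R, ∀ ua va ub vb uc vc : H,
          ε ua = S.X i l a → ε va = S.X l j 1 →
          ε ub = S.X i l b → ε vb = S.X l j 1 →
          ε uc = S.X i l (a + b) → ε vc = S.X l j 1 →
          ⁅ua, va⁆ * ⁅ub, vb⁆ = ⁅uc, vc⁆) ∧
      (∀ l m : ℤ, l ∈ Omega n → m ∈ Omega n →
        l ≠ i → l ≠ -i → l ≠ j → l ≠ -j → m ≠ i → m ≠ -i → m ≠ j → m ≠ -j →
        ∀ a : R, ∀ u v u' v' : H,
          ε u = S.X i l a → ε v = S.X l j 1 →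
          ε u' = S.X (-j) m (epsI pi (-j) * pi.bar a * epsI pi i) →
          ε v' = S.X m (-i) 1 →
          ⁅u, v⁆ = ⁅u', v'⁆) := by
  intro i j hi hj hji hji'
  have hi0 : i ≠ 0 := hi.1
  have hj0 : j ≠ 0 := hj.1
  refine ⟨?_, ?_, ?_⟩
  · intro l l' hl hl' hli hli' hlj hlj' hl'i hl'i' hl'j hl'j' a u v u' v' hu hv hu' hv'
    exact indepS f L n hn S ε hε hdag i j hi hj hji hji' l l' hl hl'
      hli hli' hlj hlj' hl'i hl'i' hl'j hl'j' a u v u' v' hu hv hu' hv'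
  · intro l hl hli hli' hlj hlj' a b ua va ub vb uc vc hua hva hub hvb huc hvc
    exact addS f L n hn S ε hε hdag i j hi hj hji hji' l hl
      hli hli' hlj hlj' a b ua va ub vb uc vc hua hva hub hvb huc hvc
  · intro l m hl hm hli hli' hlj hlj' hmi hmi' hmj hmj' a u v u' v' hu hv hu' hv'
    exact part3S f L n hn S ε hε hdag i j hi hj hji hji' l m hl hm
      hli hli' hlj hlj' hmi hmi' hmj hmj' a u v u' v' hu hv hu' hv'
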